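/- Define Γ_b(τ) = ∫₀^∞ (8ρ²/(ρ²+1)²) · (1 − e^{−τ(1+ρ²)/4})/(τ(1+ρ²)) dρ for τ > 0. Then: (i) lim_{τ→0⁺} Γ_b(τ) = π/2, so Γ_b extends continuously to τ = 0 with a nonzero value; and (ii) Γ_b(τ) ≤ π/(2τ) for all τ > 0, so Γ_b(τ) = O(1/τ) as τ → ∞. -/

import Mathlib

noncomputable section

open MeasureTheory

open Real Filter Set MeasureTheory Topology

-- integrability helpers
lemma contA : Continuous fun x : ℝ => x ^ 2 / (x ^ 2 + 1) ^ 2 := by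
  apply Continuous.div (by continuity) (by continuity)
  intro x; positivity

lemma contB : Continuous fun x : ℝ => x ^ 2 / (x ^ 2 + 1) ^ 3 := by
  apply Continuous.div (by continuity) (by continuity)
  intro x; positivity

lemma intA : IntegrableOn (fun x : ℝ => x ^ 2 / (x ^ 2 + 1) ^ 2) (Ioi 0) := by
  apply (integrable_inv_one_add_sq.integrableOn).mono'
    contA.aestronglyMeasurable
  filter_upwards with x
  rw [Real.norm_eq_abs, abs_of_nonneg (by positivity)]
  rw [div_le_iff₀ (by positivity), inv_mul_eq_div, le_div_iff₀ (by positivity)]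
  nlinarith [sq_nonneg x, sq_nonneg (x^2)]

lemma intB : IntegrableOn (fun x : ℝ => x ^ 2 / (x ^ 2 + 1) ^ 3) (Ioi 0) := by
  apply (integrable_inv_one_add_sq.integrableOn).mono'
    contB.aestronglyMeasurable
  filter_upwards with x
  rw [Real.norm_eq_abs, abs_of_nonneg (by positivity)]
  rw [div_le_iff₀ (by positivity), inv_mul_eq_div, le_div_iff₀ (by positivity)]
  nlinarith [sq_nonneg x, sq_nonneg (x^2), sq_nonneg (x^3)]

lemma valA : ∫ x in Ioi (0:ℝ), x ^ 2 / (x ^ 2 + 1) ^ 2 = π / 4 := by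
  have h := MeasureTheory.integral_Ioi_of_hasDerivAt_of_tendsto'
    (a := (0:ℝ)) (m := π/4)
    (f := fun x => (arctan x - x / (x ^ 2 + 1)) / 2)
    (f' := fun x => x ^ 2 / (x ^ 2 + 1) ^ 2)
    ?_ intA ?_
  · simpa using h
  · intro x _
    have h1 : HasDerivAt (fun x : ℝ => x ^ 2 + 1) (2 * x) x := by
      simpa using (hasDerivAt_pow 2 x).add_const 1
    have h2 : HasDerivAt (fun x : ℝ => x / (x ^ 2 + 1))
        ((1 * (x ^ 2 + 1) - x * (2 * x)) / (x ^ 2 + 1) ^ 2) x :=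
      (hasDerivAt_id x).div h1 (by positivity)
    have h3 := ((Real.hasDerivAt_arctan x).sub h2).div_const 2
    refine h3.congr_deriv ?_
    have hne : (x:ℝ) ^ 2 + 1 ≠ 0 := by positivity
    field_simp
    ring
  · have h1 : Tendsto (fun x : ℝ => arctan x) atTop (𝓝 (π/2)) :=
      tendsto_nhds_of_tendsto_nhdsWithin tendsto_arctan_atTop
    have h2 : Tendsto (fun x : ℝ => x / (x ^ 2 + 1)) atTop (𝓝 0) := by
      apply squeeze_zero' (g := fun x : ℝ => x⁻¹)
      · filter_upwards [eventually_ge_atTop (0:ℝ)] with x hx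
        positivity
      · filter_upwards [eventually_ge_atTop (1:ℝ)] with x hx
        rw [div_le_iff₀ (by positivity)]
        have hx0 : (0:ℝ) < x := by linarith
        have : x⁻¹ * (x ^ 2 + 1) = x + x⁻¹ := by field_simp
        rw [this]
        have : (0:ℝ) ≤ x⁻¹ := by positivity
        linarith
      · exact tendsto_inv_atTop_zero
    have := (h1.sub h2).div_const 2
    have e : π / 2 / 2 = π / 4 := by ring
    rw [← e]
    simpa using this

lemma valB : ∫ x in Ioi (0:ℝ), x ^ 2 / (x ^ 2 + 1) ^ 3 = π / 16 := by
  have h := MeasureTheory.integral_Ioi_of_hasDerivAt_of_tendsto'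
    (a := (0:ℝ)) (m := π/16)
    (f := fun x => arctan x / 8 + (x ^ 3 - x) / (8 * (x ^ 2 + 1) ^ 2))
    (f' := fun x => x ^ 2 / (x ^ 2 + 1) ^ 3)
    ?_ intB ?_
  · simpa using h
  · intro x _
    have h1 : HasDerivAt (fun x : ℝ => x ^ 2 + 1) (2 * x) x := by
      simpa using (hasDerivAt_pow 2 x).add_const 1
    have h2 : HasDerivAt (fun x : ℝ => (x ^ 2 + 1) ^ 2)
        (2 * (x ^ 2 + 1) ^ 1 * (2 * x)) x := h1.pow 2
    have h3 : HasDerivAt (fun x : ℝ => 8 * (x ^ 2 + 1) ^ 2)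
        (8 * (2 * (x ^ 2 + 1) ^ 1 * (2 * x))) x := h2.const_mul 8
    have h4 : HasDerivAt (fun x : ℝ => x ^ 3 - x) (3 * x ^ 2 - 1) x := by
      exact ((hasDerivAt_pow 3 x).sub (hasDerivAt_id' x)).congr_deriv (by norm_num)
    have h5 : HasDerivAt (fun x : ℝ => (x ^ 3 - x) / (8 * (x ^ 2 + 1) ^ 2))
        (((3 * x ^ 2 - 1) * (8 * (x ^ 2 + 1) ^ 2)
          - (x ^ 3 - x) * (8 * (2 * (x ^ 2 + 1) ^ 1 * (2 * x))))
          / (8 * (x ^ 2 + 1) ^ 2) ^ 2) x :=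
      h4.div h3 (by positivity)
    have h6 := ((Real.hasDerivAt_arctan x).div_const 8).add h5
    refine h6.congr_deriv ?_
    have hne : (x:ℝ) ^ 2 + 1 ≠ 0 := by positivity
    field_simp
    ring
  · have h1 : Tendsto (fun x : ℝ => arctan x / 8) atTop (𝓝 (π/16)) := by
      have := (tendsto_nhds_of_tendsto_nhdsWithin tendsto_arctan_atTop).div_const 8
      have e : π / 2 / 8 = π / 16 := by ring
      rwa [e] at this
    have h2 : Tendsto (fun x : ℝ => (x ^ 3 - x) / (8 * (x ^ 2 + 1) ^ 2)) atTop (𝓝 0) := by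
      apply squeeze_zero' (g := fun x : ℝ => x⁻¹)
      · filter_upwards [eventually_ge_atTop (1:ℝ)] with x hx
        have hx0 : (0:ℝ) < x := by linarith
        apply div_nonneg _ (by positivity)
        have hx2 : (1:ℝ) ≤ x ^ 2 := by nlinarith
        nlinarith [mul_nonneg hx0.le (by linarith : (0:ℝ) ≤ x ^ 2 - 1)]
      · filter_upwards [eventually_ge_atTop (1:ℝ)] with x hx
        have hx0 : (0:ℝ) < x := by linarith
        rw [div_le_iff₀ (by positivity)]
        have e : x⁻¹ * (8 * (x ^ 2 + 1) ^ 2) = 8 * (x ^ 2 + 1) ^ 2 / x := by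
          field_simp
        rw [e, le_div_iff₀ hx0]
        nlinarith [sq_nonneg x, sq_nonneg (x^2 - 1)]
      · exact tendsto_inv_atTop_zero
    simpa using h1.add h2

lemma slope_lim (c : ℝ) (hc : 0 < c) :
    Tendsto (fun τ : ℝ => (1 - Real.exp (-(τ * c) / 4)) / (τ * c))
      (nhdsWithin 0 (Ioi 0)) (𝓝 (1/4)) := by
  have hφ : HasDerivAt (fun s : ℝ => 1 - Real.exp (-s / 4)) (1/4) 0 := by
    have h1 : HasDerivAt (fun s : ℝ => -s / 4) (-(1:ℝ)/4) 0 := by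
      simpa using ((hasDerivAt_id (0:ℝ)).neg.div_const 4)
    have h2 := (h1.exp).const_sub 1
    refine h2.congr_deriv ?_
    norm_num
  have hslope := hasDerivAt_iff_tendsto_slope.mp hφ
  have hmap : Tendsto (fun τ : ℝ => τ * c) (nhdsWithin 0 (Ioi 0)) (nhdsWithin 0 {(0:ℝ)}ᶜ) := by
    rw [tendsto_nhdsWithin_iff]
    constructor
    · have : Tendsto (fun τ : ℝ => τ * c) (nhdsWithin 0 (Ioi 0)) (𝓝 (0 * c)) :=
        (tendsto_id.mul_const c).mono_left nhdsWithin_le_nhds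
      simpa using this
    · filter_upwards [self_mem_nhdsWithin] with τ (hτ : 0 < τ)
      exact (ne_of_gt (mul_pos hτ hc))
  have := hslope.comp hmap
  apply this.congr
  intro τ
  simp [Function.comp, slope_def_field]


/-- The boundary contribution function
`Γ_b(τ) = ∫₀^∞ (8ρ²/(ρ²+1)²) · (1 − e^{−τ(1+ρ²)/4})/(τ(1+ρ²)) dρ`. -/
def Gammab (τ : ℝ) : ℝ :=
  ∫ ρ in Set.Ioi (0 : ℝ),
    (8 * ρ ^ 2 / (ρ ^ 2 + 1) ^ 2) *
      ((1 - Real.exp (-(τ * (1 + ρ ^ 2)) / 4)) / (τ * (1 + ρ ^ 2)))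

/-- `Γ_b(τ) → π/2` as `τ → 0⁺`, and `Γ_b(τ) ≤ π/(2τ)` for all `τ > 0`. -/
theorem Gammab_limit_and_decay :
    Filter.Tendsto Gammab (nhdsWithin 0 (Set.Ioi 0)) (nhds (Real.pi / 2)) ∧
    ∀ τ : ℝ, 0 < τ → Gammab τ ≤ Real.pi / (2 * τ) := by
  constructor
  · have key := MeasureTheory.tendsto_integral_filter_of_dominated_convergence
      (μ := volume.restrict (Ioi (0:ℝ))) (l := nhdsWithin 0 (Ioi 0))
      (F := fun τ ρ => (8 * ρ ^ 2 / (ρ ^ 2 + 1) ^ 2) *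
        ((1 - Real.exp (-(τ * (1 + ρ ^ 2)) / 4)) / (τ * (1 + ρ ^ 2))))
      (f := fun ρ => 2 * (ρ ^ 2 / (ρ ^ 2 + 1) ^ 2))
      (bound := fun ρ => 2 * (ρ ^ 2 / (ρ ^ 2 + 1) ^ 2))
      ?_ ?_ ?_ ?_
    · have hval : ∫ ρ in Ioi (0:ℝ), 2 * (ρ ^ 2 / (ρ ^ 2 + 1) ^ 2) = π / 2 := by
        rw [MeasureTheory.integral_const_mul, valA]; ring
      rw [hval] at key
      exact key
    · filter_upwards [self_mem_nhdsWithin] with τ (hτ : 0 < τ)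
      have hcont : Continuous fun ρ : ℝ => (8 * ρ ^ 2 / (ρ ^ 2 + 1) ^ 2) *
          ((1 - Real.exp (-(τ * (1 + ρ ^ 2)) / 4)) / (τ * (1 + ρ ^ 2))) := by
        apply Continuous.mul
        · apply Continuous.div (by continuity) (by continuity)
          intro x; positivity
        · apply Continuous.div (by continuity) (by continuity)
          intro x; positivity
      exact hcont.aestronglyMeasurable
    · filter_upwards [self_mem_nhdsWithin] with τ (hτ : 0 < τ)
      apply MeasureTheory.ae_of_all
      intro ρ
      have hc : (0:ℝ) < τ * (1 + ρ ^ 2) := by positivity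
      have he1 : Real.exp (-(τ * (1 + ρ ^ 2)) / 4) ≤ 1 := by
        apply Real.exp_le_one_iff.mpr
        have : (0:ℝ) ≤ τ * (1 + ρ ^ 2) := hc.le
        linarith
      have he2 : 1 - τ * (1 + ρ ^ 2) / 4 ≤ Real.exp (-(τ * (1 + ρ ^ 2)) / 4) := by
        have := Real.add_one_le_exp (-(τ * (1 + ρ ^ 2)) / 4)
        linarith
      have hF0 : 0 ≤ (8 * ρ ^ 2 / (ρ ^ 2 + 1) ^ 2) *
          ((1 - Real.exp (-(τ * (1 + ρ ^ 2)) / 4)) / (τ * (1 + ρ ^ 2))) := by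
        apply mul_nonneg (by positivity)
        exact div_nonneg (by linarith) hc.le
      rw [Real.norm_eq_abs, abs_of_nonneg hF0]
      have hq : (1 - Real.exp (-(τ * (1 + ρ ^ 2)) / 4)) / (τ * (1 + ρ ^ 2)) ≤ 1 / 4 := by
        rw [div_le_iff₀ hc]; linarith
      calc (8 * ρ ^ 2 / (ρ ^ 2 + 1) ^ 2) *
            ((1 - Real.exp (-(τ * (1 + ρ ^ 2)) / 4)) / (τ * (1 + ρ ^ 2)))
          ≤ (8 * ρ ^ 2 / (ρ ^ 2 + 1) ^ 2) * (1 / 4) :=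
            mul_le_mul_of_nonneg_left hq (by positivity)
        _ = 2 * (ρ ^ 2 / (ρ ^ 2 + 1) ^ 2) := by ring
    · exact intA.const_mul 2
    · apply MeasureTheory.ae_of_all
      intro ρ
      have h := (slope_lim (1 + ρ ^ 2) (by positivity)).const_mul
        (8 * ρ ^ 2 / (ρ ^ 2 + 1) ^ 2)
      have e : (8 * ρ ^ 2 / (ρ ^ 2 + 1) ^ 2) * (1 / 4) = 2 * (ρ ^ 2 / (ρ ^ 2 + 1) ^ 2) := by
        ring
      rw [e] at h
      exact h
  · intro τ hτ
    have hτ' : τ ≠ 0 := ne_of_gt hτ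
    have hle : Gammab τ ≤ ∫ ρ in Ioi (0:ℝ), 8 / τ * (ρ ^ 2 / (ρ ^ 2 + 1) ^ 3) := by
      unfold Gammab
      apply MeasureTheory.integral_mono_of_nonneg
      · apply MeasureTheory.ae_of_all
        intro ρ
        have hc : (0:ℝ) < τ * (1 + ρ ^ 2) := by positivity
        have he1 : Real.exp (-(τ * (1 + ρ ^ 2)) / 4) ≤ 1 := by
          apply Real.exp_le_one_iff.mpr
          have : (0:ℝ) ≤ τ * (1 + ρ ^ 2) := hc.le
          linarith
        apply mul_nonneg (by positivity)
        exact div_nonneg (by linarith) hc.le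
      · exact intB.const_mul (8 / τ)
      · apply MeasureTheory.ae_of_all
        intro ρ
        have hc : (0:ℝ) < τ * (1 + ρ ^ 2) := by positivity
        have hρ : (0:ℝ) < (ρ ^ 2 + 1) := by positivity
        have he0 : (0:ℝ) < Real.exp (-(τ * (1 + ρ ^ 2)) / 4) := Real.exp_pos _
        have hq : (1 - Real.exp (-(τ * (1 + ρ ^ 2)) / 4)) / (τ * (1 + ρ ^ 2))
            ≤ 1 / (τ * (1 + ρ ^ 2)) := by
          gcongr
          linarith
        calc (8 * ρ ^ 2 / (ρ ^ 2 + 1) ^ 2) *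
              ((1 - Real.exp (-(τ * (1 + ρ ^ 2)) / 4)) / (τ * (1 + ρ ^ 2)))
            ≤ (8 * ρ ^ 2 / (ρ ^ 2 + 1) ^ 2) * (1 / (τ * (1 + ρ ^ 2))) :=
              mul_le_mul_of_nonneg_left hq (by positivity)
          _ = 8 / τ * (ρ ^ 2 / (ρ ^ 2 + 1) ^ 3) := by
              have h1 : (ρ:ℝ) ^ 2 + 1 ≠ 0 := by positivity
              have h2 : τ * (1 + ρ ^ 2) ≠ 0 := ne_of_gt hc
              rw [div_mul_div_comm, div_mul_div_comm]
              rw [div_eq_div_iff (by positivity) (by positivity)]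
              ring
    have hval : ∫ ρ in Ioi (0:ℝ), 8 / τ * (ρ ^ 2 / (ρ ^ 2 + 1) ^ 3) = π / (2 * τ) := by
      rw [MeasureTheory.integral_const_mul, valB]
      field_simp
      ring
    rw [hval] at hle
    exact hle
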